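/- Suppose n = |P| is even and every connected component of the seat graph G is a single edge (G is a disjoint union of n/2 edges). Then an envy-free arrangement exists if and only if P can be partitioned into n/2 pairs {p, q} such that f_p(q) ≥ f_p(r) for every r ∈ P \ {p} and f_q(p) ≥ f_q(r) for every r ∈ P \ {q} (i.e., each agent in the pair is a most-preferred agent of the other). -/

import Mathlib

open scoped Classical

noncomputable section

namespace SeatArrangement

variable {P V : Type*}

/-- The utility of agent `p` under arrangement `π`:
the sum, over the seat-graph neighbors `v` of `π p`, of `p`'s preference for the agent seated
at `v`. -/
def utility [Fintype V] (G : SimpleGraph V) (f : P → P → ℝ) (π : P ≃ V) (p : P) : ℝ :=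
  ∑ v : V, if G.Adj (π p) v then f p (π.symm v) else 0

/-- The social welfare of an arrangement: the sum of the utilities of all agents. -/
def sw [Fintype P] [Fintype V] (G : SimpleGraph V) (f : P → P → ℝ) (π : P ≃ V) : ℝ :=
  ∑ p : P, utility G f π p

/-- The `(p,q)`-swap arrangement of `π`. -/
def swapArr (π : P ≃ V) (p q : P) : P ≃ V := (Equiv.swap p q).trans π

/-- `{p, q}` is a blocking pair for `π`: both agents strictly improve by swapping seats. -/
def blocking [Fintype V] (G : SimpleGraph V) (f : P → P → ℝ) (π : P ≃ V) (p q : P) : Prop :=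
  p ≠ q ∧ utility G f π p < utility G f (swapArr π p q) p
        ∧ utility G f π q < utility G f (swapArr π p q) q

/-- An arrangement is stable if it has no blocking pair. -/
def stable [Fintype V] (G : SimpleGraph V) (f : P → P → ℝ) (π : P ≃ V) : Prop :=
  ∀ p q : P, ¬ blocking G f π p q

/-- An arrangement is envy-free if no agent would strictly improve by taking
another agent's seat (via a swap). -/
def envyFree [Fintype V] (G : SimpleGraph V) (f : P → P → ℝ) (π : P ≃ V) : Prop :=
  ∀ p q : P, p ≠ q → utility G f (swapArr π p q) p ≤ utility G f π p

/-- The least utility of an agent under `π` (for a finite nonempty set of agents, the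
infimum of the range of utilities is the minimum utility). -/
def minUtil [Fintype V] (G : SimpleGraph V) (f : P → P → ℝ) (π : P ≃ V) : ℝ :=
  sInf (Set.range (utility G f π))

/-- A maximin arrangement maximizes the least utility of an agent. -/
def maximin [Fintype V] (G : SimpleGraph V) (f : P → P → ℝ) (πf : P ≃ V) : Prop :=
  ∀ π : P ≃ V, minUtil G f π ≤ minUtil G f πf

/-- A maximum arrangement maximizes the social welfare. -/
def maximum [Fintype P] [Fintype V] (G : SimpleGraph V) (f : P → P → ℝ) (πm : P ≃ V) : Prop :=
  ∀ π : P ≃ V, sw G f π ≤ sw G f πm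

end SeatArrangement

open SeatArrangement

lemma cycleType_invol {A : Type*} [Fintype A] [DecidableEq A] (s : Equiv.Perm A)
    (h2 : s * s = 1) (hfix : ∀ x, s x ≠ x) :
    s.cycleType = Multiset.replicate (Fintype.card A / 2) 2 := by
  have horder : orderOf s ∣ 2 := orderOf_dvd_of_pow_eq_one (by rw [sq]; exact h2)
  have hall : ∀ n ∈ s.cycleType, n = 2 := by
    intro n hn
    have hd : n ∣ 2 := (Multiset.dvd_lcm hn).trans
      (by rw [Equiv.Perm.lcm_cycleType] ; exact horder)
    exact le_antisymm (Nat.le_of_dvd two_pos hd) (Equiv.Perm.two_le_of_mem_cycleType hn)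
  have hsupp : s.support = Finset.univ := by
    ext x; simp [Equiv.Perm.mem_support, hfix x]
  have hsum : s.cycleType.sum = Fintype.card A := by
    rw [Equiv.Perm.sum_cycleType, hsupp, Finset.card_univ]
  have hrep : s.cycleType = Multiset.replicate s.cycleType.card 2 :=
    Multiset.eq_replicate_card.mpr hall
  have hcard : s.cycleType.card * 2 = Fintype.card A := by
    rw [hrep] at hsum
    simpa [Multiset.sum_replicate, mul_comm] using hsum
  have : s.cycleType.card = Fintype.card A / 2 := by omega
  rw [hrep, this]

/-- if every connected component of the seat graph is a single edge (every
vertex has exactly one neighbor), then an envy-free arrangement exists if and only if the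
agents can be partitioned into pairs (an involution `μ` without fixed points) such that each
agent of a pair is a most-preferred agent of the other. -/
theorem envyFree_iff_mutual_best_pairing {P V : Type*} [Fintype P] [Fintype V]
    (G : SimpleGraph V) (f : P → P → ℝ)
    (hmatch : ∀ v : V, ∃! w : V, G.Adj v w)
    (hne : Nonempty (P ≃ V)) :
    (∃ π : P ≃ V, envyFree G f π) ↔
    (∃ μ : P → P, Function.Involutive μ ∧ (∀ p : P, μ p ≠ p) ∧
      ∀ p r : P, r ≠ p → f p r ≤ f p (μ p)) := by
  classical
  -- The matching function on vertices
  set ν : V → V := fun v => (hmatch v).choose with hν_def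
  have hν : ∀ v, G.Adj v (ν v) := fun v => (hmatch v).choose_spec.1
  have huniq : ∀ v w, G.Adj v w → w = ν v := fun v w h => (hmatch v).choose_spec.2 w h
  have hνinv : Function.Involutive ν := fun v => (huniq (ν v) v ((hν v).symm)).symm
  have hνfix : ∀ v, ν v ≠ v := fun v => (hν v).ne'
  have hutil : ∀ (π : P ≃ V) (p : P), utility G f π p = f p (π.symm (ν (π p))) := by
    intro π p
    unfold utility
    rw [Finset.sum_eq_single (ν (π p))]
    · rw [if_pos (hν (π p))]
    · intro v _ hvne
      rw [if_neg]
      exact fun hadj => hvne (huniq (π p) v hadj)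
    · simp
  constructor
  · rintro ⟨π, hEF⟩
    refine ⟨fun p => π.symm (ν (π p)), ?_, ?_, ?_⟩
    · intro p; simp [hνinv (π p)]
    · intro p h
      apply hνfix (π p)
      have := congrArg π h
      simpa using this
    · intro p r hr
      set μ : P → P := fun p => π.symm (ν (π p)) with hμ_def
      have hμinv : ∀ p, μ (μ p) = p := by intro p; simp [hμ_def, hνinv (π p)]
      by_cases hr' : r = μ p
      · rw [hr']
      · set q : P := μ r with hq_def
        have hqr : q ≠ r := by
          intro h
          exact hνfix (π r) (by simpa [hq_def, hμ_def] using congrArg π h)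
        have hqp : p ≠ q := by
          intro h
          apply hr'
          have := congrArg μ h
          rw [hμinv] at this
          exact this.symm
        have key := hEF p q hqp
        rw [hutil, hutil] at key
        have h1 : (swapArr π p q) p = π q := by
          simp [swapArr, Equiv.swap_apply_left]
        have h2 : ν (π q) = π r := by
          have : π (μ q) = ν (π q) := by simp [hμ_def]
          rw [← this, hμinv]
        have h3 : (swapArr π p q).symm (ν ((swapArr π p q) p)) = r := by
          rw [h1, h2]
          simp [swapArr, Equiv.swap_apply_of_ne_of_ne hr (Ne.symm hqr)]
        rw [h3] at key
        calc f p r ≤ f p (π.symm (ν (π p))) := key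
          _ = f p (μ p) := by rw [hμ_def]
  · rintro ⟨μ, hinv, hfix, hbest⟩
    set e0 : P ≃ V := hne.some
    set μ' : Equiv.Perm P := hinv.toPerm μ with hμ'_def
    set νV : Equiv.Perm V := hνinv.toPerm ν with hνV_def
    set νP : Equiv.Perm P := (e0.trans νV).trans e0.symm with hνP_def
    have hνPapp : ∀ p, νP p = e0.symm (ν (e0 p)) := fun p => rfl
    have hμ2 : μ' * μ' = 1 := by
      ext p; simp [hμ'_def, Function.Involutive.toPerm, hinv p]
    have hν2 : νP * νP = 1 := by
      ext p
      simp [hνP_def, hνV_def, Function.Involutive.toPerm, hνinv (e0 p)]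
    have hμfix' : ∀ p, μ' p ≠ p := fun p => hfix p
    have hνPfix : ∀ p, νP p ≠ p := by
      intro p h
      apply hνfix (e0 p)
      have := congrArg e0 h
      simpa [hνPapp] using this
    have hconj : IsConj μ' νP := by
      rw [Equiv.Perm.isConj_iff_cycleType_eq,
        cycleType_invol μ' hμ2 hμfix', cycleType_invol νP hν2 hνPfix]
    obtain ⟨σ, hσ⟩ := isConj_iff.mp hconj
    have hσ' : σ * μ' = νP * σ := by
      rw [← hσ]; group
    have hkey : ∀ p, σ (μ p) = e0.symm (ν (e0 (σ p))) := by
      intro p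
      have := congrFun (congrArg (fun (t : Equiv.Perm P) => (t : P → P)) hσ') p
      simpa [Equiv.Perm.mul_apply, hμ'_def, Function.Involutive.toPerm, hνPapp] using this
    set π : P ≃ V := (σ : P ≃ P).trans e0 with hπ_def
    have hπμ : ∀ p, π (μ p) = ν (π p) := by
      intro p
      simp only [hπ_def, Equiv.trans_apply]
      rw [hkey p]
      simp
    refine ⟨π, ?_⟩
    intro p q hpq
    rw [hutil, hutil]
    have h1 : (swapArr π p q) p = π q := by
      simp [swapArr, Equiv.swap_apply_left]
    have h2 : ν (π q) = π (μ q) := (hπμ q).symm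
    have hswp : Equiv.swap p q (μ q) ≠ p := by
      intro h
      have : μ q = q := by
        have := congrArg (Equiv.swap p q) h
        simpa [Equiv.swap_apply_self, Equiv.swap_apply_left] using this
      exact hfix q this
    have h3 : (swapArr π p q).symm (ν ((swapArr π p q) p)) = Equiv.swap p q (μ q) := by
      rw [h1, h2]
      simp [swapArr]
    rw [h3]
    have h4 : π.symm (ν (π p)) = μ p := by
      rw [← hπμ p]; simp
    rw [h4]
    exact hbest p _ hswp
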